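/- Let X and Y be Banach spaces with a common closed subspace Z (i.e., Z embeds isometrically into both X and Y). Consider the direct sum X ⊕ Y with norm ‖(x,y)‖ = ‖x‖_X + ‖y‖_Y, let Δ = {(z,−z) : z ∈ Z}, and let W = (X ⊕ Y)/Δ. Then the linear map i' : X → W defined by i'(x) = (x,0) + Δ is an isometry, i.e., ‖i'(x)‖_W = ‖x‖_X for all x ∈ X. -/

import Mathlib

lemma norm_one_add {X Y : Type*} [NormedAddCommGroup X] [NormedAddCommGroup Y]
    (f : WithLp 1 (X × Y)) : ‖f‖ = ‖f.fst‖ + ‖f.snd‖ := by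
  have := WithLp.prod_norm_eq_add (p := 1) (by norm_num) f
  simpa using this

/-- In the amalgamation `W = (X ⊕₁ Y)/Δ`, where `Z` is a common closed
subspace of the Banach spaces `X` and `Y` (via linear isometric embeddings `iX`, `iY`),
`X ⊕₁ Y` carries the norm `‖(x,y)‖ = ‖x‖ + ‖y‖` and `Δ = {(iX z, -iY z) : z ∈ Z}`,
the map `i' : x ↦ (x,0) + Δ` is an isometry: `‖i'(x)‖_W = ‖x‖_X` for all `x`. -/
theorem stmt0
    {X Y Z : Type*}
    [NormedAddCommGroup X] [NormedSpace ℝ X] [CompleteSpace X]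
    [NormedAddCommGroup Y] [NormedSpace ℝ Y] [CompleteSpace Y]
    [NormedAddCommGroup Z] [NormedSpace ℝ Z] [CompleteSpace Z]
    (iX : Z →ₗᵢ[ℝ] X) (iY : Z →ₗᵢ[ℝ] Y)
    (Δ : Submodule ℝ (WithLp 1 (X × Y)))
    (hΔ : (Δ : Set (WithLp 1 (X × Y))) =
      Set.range (fun z : Z => (WithLp.toLp 1 (iX z, -iY z) : WithLp 1 (X × Y))))
    (x : X) :
    ‖(Submodule.Quotient.mk (WithLp.toLp 1 (x, (0 : Y)) : WithLp 1 (X × Y)) :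
        WithLp 1 (X × Y) ⧸ Δ)‖ = ‖x‖ := by
  set v : WithLp 1 (X × Y) := (WithLp.toLp 1 (x, (0 : Y)) : WithLp 1 (X × Y)) with hv
  have hvf : v.fst = x := rfl
  have hvs : v.snd = (0 : Y) := rfl
  apply le_antisymm
  · calc ‖(Submodule.Quotient.mk v : WithLp 1 (X × Y) ⧸ Δ)‖ ≤ ‖v‖ :=
          Submodule.Quotient.norm_mk_le _ _
    _ = ‖x‖ := by rw [norm_one_add, hvf, hvs]; simp
  · refine le_of_forall_pos_le_add fun ε hε => ?_
    obtain ⟨m, hm, hlt⟩ := Submodule.Quotient.norm_mk_lt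
      (Submodule.Quotient.mk v : WithLp 1 (X × Y) ⧸ Δ) hε
    have hmem : v - m ∈ Δ := by rw [← Submodule.Quotient.eq]; exact hm.symm
    have : v - m ∈ Set.range (fun z : Z => (WithLp.toLp 1 (iX z, -iY z) : WithLp 1 (X × Y))) := by
      rw [← hΔ]; exact hmem
    obtain ⟨z, hz⟩ := this
    have h1 : iX z = x - m.fst := by
      have := congrArg (fun w : WithLp 1 (X × Y) => w.fst) hz
      simpa [hvf] using this
    have h2 : -iY z = -m.snd := by
      have := congrArg (fun w : WithLp 1 (X × Y) => w.snd) hz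
      simpa [hvs] using this
    have hm1 : m.fst = x - iX z := by rw [h1]; abel
    have hm2 : m.snd = iY z := by
      have := neg_injective h2; exact this.symm
    have hnorm : ‖m‖ = ‖x - iX z‖ + ‖z‖ := by
      rw [norm_one_add, hm1, hm2, iY.norm_map]
    have hge : ‖x‖ ≤ ‖m‖ := by
      rw [hnorm]
      calc ‖x‖ ≤ ‖x - iX z‖ + ‖iX z‖ := by
            simpa using norm_add_le (x - iX z) (iX z)
      _ = ‖x - iX z‖ + ‖z‖ := by rw [iX.norm_map]
    linarith
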